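/- Let A be a finite dimensional k-algebra and let M, N be families of finite dimensional A-modules with N hyperfinite. If there exists H ≥ 0 such that every module M in the family M has a submodule N ∈ N with dim_k M - dim_k N ≤ H, then the family M is also hyperfinite. -/

import Mathlib

/-- A bundled finite (dimensional) module over the `k`-algebra `A`. -/
structure FDMod (k A : Type) [Field k] [Ring A] [Algebra k A] where
  carrier : Type
  [acg : AddCommGroup carrier]
  [mod : Module A carrier]
  [fin : Module.Finite A carrier]

attribute [instance] FDMod.acg FDMod.mod FDMod.fin

/-- The dimension over `k` of an `A`-module (via restriction of scalars). -/
noncomputable def kdim (k A : Type) [Field k] [Ring A] [Algebra k A]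
    (X : Type) [AddCommGroup X] [Module A X] : ℕ :=
  Module.finrank k (RestrictScalars k A X)

/-- A family of `A`-modules is hyperfinite if for every `ε > 0` there is `L_ε > 0` such
that every member `M` has a submodule `N` with `dim N ≥ (1-ε)·dim M` which is the
(internal) direct sum of submodules of `k`-dimension at most `L_ε`. -/
def Hyperfinite (k A : Type) [Field k] [Ring A] [Algebra k A]
    (ℳ : Set (FDMod k A)) : Prop :=
  ∀ ε : ℝ, 0 < ε → ∃ L : ℕ, 0 < L ∧ ∀ M ∈ ℳ,
    ∃ N : Submodule A M.carrier,
      (1 - ε) * (kdim k A M.carrier : ℝ) ≤ (kdim k A N : ℝ) ∧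
      ∃ (t : ℕ) (P : Fin t → Submodule A M.carrier),
        (∀ i, P i ≤ N) ∧ iSup P = N ∧ iSupIndep P ∧
        ∀ i, kdim k A (P i) ≤ L

section aux
variable {k A : Type} [Field k] [Ring A] [Algebra k A]

/-- An `A`-linear equiv induces a `k`-linear equiv on restricted scalars. -/
def restrictEquiv {X Y : Type} [AddCommGroup X] [Module A X] [AddCommGroup Y] [Module A Y]
    (e : X ≃ₗ[A] Y) : RestrictScalars k A X ≃ₗ[k] RestrictScalars k A Y where
  toFun x := (RestrictScalars.addEquiv k A Y).symm (e (RestrictScalars.addEquiv k A X x))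
  invFun y := (RestrictScalars.addEquiv k A X).symm (e.symm (RestrictScalars.addEquiv k A Y y))
  left_inv x := by simp
  right_inv y := by simp
  map_add' x y := by simp
  map_smul' c x := by simp [RestrictScalars.smul_def, map_smul]

theorem fd_restrict {X : Type} [AddCommGroup X] [Module A X] [Module.Finite A X]
    [FiniteDimensional k A] : Module.Finite k (RestrictScalars k A X) := by
  letI : Module A (RestrictScalars k A X) := RestrictScalars.moduleOrig k A X
  haveI : Module.Finite A (RestrictScalars k A X) := ‹Module.Finite A X›
  exact Module.Finite.trans A (RestrictScalars k A X)

theorem kdim_eq_of_equiv {X Y : Type} [AddCommGroup X] [Module A X] [AddCommGroup Y]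
    [Module A Y] (e : X ≃ₗ[A] Y) : kdim k A X = kdim k A Y :=
  (restrictEquiv e : RestrictScalars k A X ≃ₗ[k] RestrictScalars k A Y).finrank_eq

theorem kdim_map_of_injective {X Y : Type} [AddCommGroup X] [Module A X] [AddCommGroup Y]
    [Module A Y] (f : X →ₗ[A] Y) (hf : Function.Injective f) (Q : Submodule A X) :
    kdim k A (Q.map f) = kdim k A Q :=
  (kdim_eq_of_equiv (Submodule.equivMapOfInjective f hf Q)).symm

theorem kdim_top (X : Type) [AddCommGroup X] [Module A X] :
    kdim k A (⊤ : Submodule A X) = kdim k A X :=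
  kdim_eq_of_equiv (Submodule.topEquiv)

/-- An `A`-linear map induces a `k`-linear map on restricted scalars. -/
def restrictMap {X Y : Type} [AddCommGroup X] [Module A X] [AddCommGroup Y] [Module A Y]
    (f : X →ₗ[A] Y) : RestrictScalars k A X →ₗ[k] RestrictScalars k A Y where
  toFun x := (RestrictScalars.addEquiv k A Y).symm (f (RestrictScalars.addEquiv k A X x))
  map_add' x y := by simp
  map_smul' c x := by simp [RestrictScalars.smul_def, map_smul]

theorem kdim_submodule_le [FiniteDimensional k A] {X : Type} [AddCommGroup X] [Module A X]
    [Module.Finite A X] (Q : Submodule A X) : kdim k A Q ≤ kdim k A X := by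
  haveI := fd_restrict (k := k) (A := A) (X := X)
  exact LinearMap.finrank_le_finrank_of_injective
    (f := restrictMap (k := k) Q.subtype)
    (fun a b hab => Q.injective_subtype (by simp [restrictMap] at hab; rw [hab]))

theorem iSupIndep_map {X Y : Type} [AddCommGroup X] [Module A X] [AddCommGroup Y]
    [Module A Y] (f : X →ₗ[A] Y) (hf : Function.Injective f) {ι : Type} {P : ι → Submodule A X}
    (hP : iSupIndep P) : iSupIndep (fun i => (P i).map f) := by
  intro i
  rw [disjoint_iff]
  simp only
  have : (⨆ j, ⨆ (_ : j ≠ i), Submodule.map f (P j)) = Submodule.map f (⨆ j, ⨆ (_ : j ≠ i), P j) := by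
    simp [Submodule.map_iSup]
  rw [this, ← Submodule.map_inf _ hf, disjoint_iff.mp (hP i), Submodule.map_bot]

end aux

/-- If every member of `ℳ` has a submodule of codimension at most `H`
isomorphic to a member of the hyperfinite family `𝒩`, then `ℳ` is hyperfinite. -/
theorem stmt0 {k A : Type} [Field k] [Ring A] [Algebra k A] [FiniteDimensional k A]
    (ℳ 𝒩 : Set (FDMod k A)) (hN : Hyperfinite k A 𝒩) (H : ℕ)
    (h : ∀ M ∈ ℳ, ∃ (N : Submodule A M.carrier) (N' : FDMod k A), N' ∈ 𝒩 ∧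
      Nonempty (N ≃ₗ[A] N'.carrier) ∧
      kdim k A M.carrier ≤ kdim k A N + H) :
    Hyperfinite k A ℳ := by
  intro ε hε
  obtain ⟨L₀, hL₀, hL⟩ := hN (ε / 2) (by positivity)
  refine ⟨max L₀ (⌈(2 * H : ℝ) / ε⌉₊ + 1), lt_of_lt_of_le hL₀ (le_max_left _ _), ?_⟩
  intro M hM
  obtain ⟨N, N', hN'mem, ⟨e⟩, hdim⟩ := h M hM
  by_cases hcase : (kdim k A M.carrier : ℝ) ≤ 2 * H / ε
  · -- small case: take the whole module
    refine ⟨⊤, ?_, 1, fun _ => ⊤, fun _ => le_rfl, ?_, ?_, ?_⟩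
    · rw [kdim_top]
      have : (0:ℝ) ≤ (kdim k A M.carrier : ℝ) := Nat.cast_nonneg _
      nlinarith
    · exact iSup_const
    · intro i
      have : (⨆ j, ⨆ (_ : j ≠ i), (⊤ : Submodule A M.carrier)) = ⊥ := by
        simp [Subsingleton.elim _ i]
      rw [disjoint_iff, this]
      exact inf_bot_eq _
    · intro i
      rw [kdim_top]
      have h1 : kdim k A M.carrier ≤ ⌈(2 * H : ℝ) / ε⌉₊ := by
        exact_mod_cast le_trans hcase (Nat.le_ceil _)
      exact le_trans (le_trans h1 (Nat.le_succ _)) (le_max_right _ _)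
  · -- big case
    obtain ⟨N'', hb, t, P', hle, hsup, hind, hbd⟩ := hL N' hN'mem
    set f : N'.carrier →ₗ[A] M.carrier := N.subtype ∘ₗ (e.symm : N'.carrier →ₗ[A] N)
    have hf : Function.Injective f := N.injective_subtype.comp e.symm.injective
    refine ⟨N''.map f, ?_, t, fun i => (P' i).map f,
      fun i => Submodule.map_mono (hle i), ?_, iSupIndep_map f hf hind, ?_⟩
    · rw [kdim_map_of_injective f hf]
      have hNN' : kdim k A N = kdim k A N'.carrier := kdim_eq_of_equiv e
      have hNle : kdim k A N ≤ kdim k A M.carrier := kdim_submodule_le N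
      have hεd : 2 * (H:ℝ) / ε < (kdim k A M.carrier : ℝ) := lt_of_not_ge hcase
      have hεd' : 2 * (H:ℝ) < ε * (kdim k A M.carrier : ℝ) := by
        rw [div_lt_iff₀ hε] at hεd; linarith
      have hdim' : (kdim k A M.carrier : ℝ) ≤ (kdim k A N : ℝ) + H := by
        exact_mod_cast hdim
      have hNle' : (kdim k A N : ℝ) ≤ (kdim k A M.carrier : ℝ) := by exact_mod_cast hNle
      rw [← hNN'] at hb
      nlinarith
    · rw [← Submodule.map_iSup, hsup]
    · intro i
      rw [kdim_map_of_injective f hf]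
      exact le_trans (hbd i) (le_max_left _ _)
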